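/- Let a > 0, c > 0, ν > 0, ω ∈ ℝ, and λ±(ω) = (a ± √(a² + 4ν(c + iω)))/(2ν) with the principal square root. Then |λ₋(ω)/λ₊(ω)| < 1, Re(λ₊(ω) − λ₋(ω)) ≥ a/ν, and |λ₊(ω)| ≥ a/ν. -/

import Mathlib

open Complex

/-- The characteristic root `λ₊(ω)` of `νλ² − aλ − (c+iω) = 0`, with the
principal square root. -/
noncomputable def lamPlus (a c ν ω : ℝ) : ℂ :=
  ((a : ℂ) + ((a : ℂ) ^ 2 + 4 * (ν : ℂ) * ((c : ℂ) + (ω : ℂ) * Complex.I)) ^ (1 / 2 : ℂ)) /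
    (2 * (ν : ℂ))

/-- The characteristic root `λ₋(ω)`. -/
noncomputable def lamMinus (a c ν ω : ℝ) : ℂ :=
  ((a : ℂ) - ((a : ℂ) ^ 2 + 4 * (ν : ℂ) * ((c : ℂ) + (ω : ℂ) * Complex.I)) ^ (1 / 2 : ℂ)) /
    (2 * (ν : ℂ))

/-- Estimates on the characteristic roots: `|λ₋/λ₊| < 1`,
`Re(λ₊ − λ₋) ≥ a/ν` and `|λ₊| ≥ a/ν`. -/
theorem lam_root_estimates (a c ν ω : ℝ) (ha : 0 < a) (hc : 0 < c) (hν : 0 < ν) :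
    ‖lamMinus a c ν ω / lamPlus a c ν ω‖ < 1 ∧
    a / ν ≤ (lamPlus a c ν ω - lamMinus a c ν ω).re ∧
    a / ν ≤ ‖lamPlus a c ν ω‖ := by
  set z : ℂ := (a : ℂ) ^ 2 + 4 * (ν : ℂ) * ((c : ℂ) + (ω : ℂ) * Complex.I) with hzdef
  have hzform : z = ((a ^ 2 + 4 * ν * c : ℝ) : ℂ) + ((4 * ν * ω : ℝ) : ℂ) * Complex.I := by
    rw [hzdef]; push_cast; ring
  have hzre : z.re = a ^ 2 + 4 * ν * c := by rw [hzform]; simp [← Complex.ofReal_pow]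
  have hzrepos : 0 < z.re := by rw [hzre]; positivity
  have hz0 : z ≠ 0 := fun h => by simp [h] at hzrepos
  set s : ℂ := z ^ (1 / 2 : ℂ) with hsdef
  -- s^2 = z
  have hs2 : s ^ 2 = z := by
    rw [hsdef]
    have : (1 / 2 : ℂ) = ((2 : ℕ) : ℂ)⁻¹ := by norm_num
    rw [this, Complex.cpow_nat_inv_pow _ (by norm_num)]
  -- Re s > 0
  have hsre : 0 < s.re := by
    rw [hsdef, Complex.cpow_def_of_ne_zero hz0, Complex.exp_re]
    apply mul_pos (Real.exp_pos _)
    have him : (Complex.log z * (1 / 2)).im = Complex.arg z / 2 := by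
      simp [Complex.mul_im, Complex.log_im]; ring
    rw [him]
    have harg : |Complex.arg z| < Real.pi / 2 :=
      Complex.abs_arg_lt_pi_div_two_iff.mpr (Or.inl hzrepos)
    apply Real.cos_pos_of_mem_Ioo
    constructor
    · have := Real.pi_pos; cases abs_lt.mp harg; linarith
    · have := Real.pi_pos; cases abs_lt.mp harg; linarith
  -- (Re s)^2 ≥ Re z
  have hresq : z.re ≤ s.re ^ 2 := by
    have h1 : s.re ^ 2 - s.im ^ 2 = z.re := by
      have := congrArg Complex.re hs2
      simpa [pow_two, Complex.mul_re] using this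
    have h2 : s.re ^ 2 + s.im ^ 2 = ‖z‖ := by
      have : ‖s‖ ^ 2 = ‖z‖ := by
        rw [← norm_pow, hs2]
      rw [← this, Complex.sq_norm, Complex.normSq_apply]; ring
    have h3 : z.re ≤ ‖z‖ := Complex.re_le_norm z
    nlinarith
  have hsa : a ≤ s.re := by nlinarith [hsre.le, hzre, mul_pos (mul_pos (by norm_num : (0:ℝ)<4) hν) hc]
  have h2ν : (2 * (ν : ℂ)) ≠ 0 := by
    simp [Complex.ext_iff, hν.ne']
  -- lamPlus re
  have hplusre : (lamPlus a c ν ω).re = (a + s.re) / (2 * ν) := by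
    rw [lamPlus]
    rw [div_eq_mul_inv]
    have hinv : (2 * (ν : ℂ))⁻¹ = (((2 * ν)⁻¹ : ℝ) : ℂ) := by push_cast; ring
    rw [hinv, ← hzdef, ← hsdef, Complex.mul_re]
    simp only [Complex.add_re, Complex.add_im, Complex.ofReal_re, Complex.ofReal_im,
      mul_zero, sub_zero]
    rw [div_eq_mul_inv]
  have hplusre' : a / ν ≤ (lamPlus a c ν ω).re := by
    rw [hplusre, div_le_div_iff₀ hν (by positivity)]
    nlinarith
  have habs : a / ν ≤ ‖lamPlus a c ν ω‖ :=
    le_trans hplusre' (Complex.re_le_norm _)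
  refine ⟨?_, ?_, habs⟩
  · have hne : lamPlus a c ν ω ≠ 0 := by
      intro h
      have := hplusre'
      rw [h] at this
      simp at this
      have : 0 < a / ν := by positivity
      linarith
    rw [norm_div, div_lt_one (norm_pos_iff.mpr hne)]
    rw [lamPlus, lamMinus, norm_div, norm_div, ← hzdef, ← hsdef]
    rw [div_lt_div_iff_of_pos_right (norm_pos_iff.mpr h2ν)]
    apply lt_of_pow_lt_pow_left₀ 2 (norm_nonneg _)
    rw [Complex.sq_norm, Complex.sq_norm, Complex.normSq_apply, Complex.normSq_apply]
    simp only [Complex.sub_re, Complex.sub_im, Complex.add_re, Complex.add_im,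
      Complex.ofReal_re, Complex.ofReal_im]
    nlinarith [hsa, hsre, ha]
  · have hdiff : lamPlus a c ν ω - lamMinus a c ν ω = s / (ν : ℂ) := by
      rw [lamPlus, lamMinus, ← hzdef, ← hsdef]
      have hν' : (ν : ℂ) ≠ 0 := by simp [hν.ne']
      field_simp
      ring
    rw [hdiff]
    have : (s / (ν : ℂ)).re = s.re / ν := by
      rw [div_eq_mul_inv]
      have hinv : ((ν : ℂ))⁻¹ = ((ν⁻¹ : ℝ) : ℂ) := by push_cast; ring
      rw [hinv, Complex.mul_re]
      simp only [Complex.ofReal_re, Complex.ofReal_im, mul_zero, sub_zero]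
      rw [div_eq_mul_inv]
    rw [this]
    gcongr
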